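/- Let A_0, …, A_n be real numbers with ∑_i A_i = 0, let M_0, …, M_n be strictly positive reals, and let p ∈ ℝ⁴. Then the function q ↦ ∑_i A_i / ((‖q+p‖² + M_i²)(‖q‖² + M_i²)) is Lebesgue integrable on ℝ⁴ and ∫_{ℝ⁴} ∑_i A_i / ((‖q+p‖² + M_i²)(‖q‖² + M_i²)) dq = -π² ∫_0^1 ∑_i A_i log(β(1-β)‖p‖² + M_i²) dβ. -/

import Mathlib

open MeasureTheory Real Set Filter

local notation "E4" => EuclideanSpace ℝ (Fin 4)

lemma pv_onedim (a b : ℝ) (ha : 0 < a) (hab : a ≤ b) :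
    IntegrableOn (fun r : ℝ => r ^ 3 * (((r ^ 2 + a) ^ 2)⁻¹ - ((r ^ 2 + b) ^ 2)⁻¹)) (Ioi 0) ∧
    ∫ r in Ioi (0:ℝ), r ^ 3 * (((r ^ 2 + a) ^ 2)⁻¹ - ((r ^ 2 + b) ^ 2)⁻¹)
      = (Real.log b - Real.log a) / 2 := by
  have hb : 0 < b := ha.trans_le hab
  set g : ℝ → ℝ := fun r =>
    (Real.log (r ^ 2 + a) + a / (r ^ 2 + a) - Real.log (r ^ 2 + b) - b / (r ^ 2 + b)) / 2 with hg
  have hpa : ∀ r : ℝ, 0 < r ^ 2 + a := fun r => by positivity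
  have hpb : ∀ r : ℝ, 0 < r ^ 2 + b := fun r => by positivity
  have hderiv : ∀ r : ℝ, HasDerivAt g (r ^ 3 * (((r ^ 2 + a) ^ 2)⁻¹ - ((r ^ 2 + b) ^ 2)⁻¹)) r := by
    intro r
    have h1 : HasDerivAt (fun r : ℝ => r ^ 2 + a) (2 * r) r := by
      simpa using ((hasDerivAt_pow 2 r).add_const a)
    have h2 : HasDerivAt (fun r : ℝ => r ^ 2 + b) (2 * r) r := by
      simpa using ((hasDerivAt_pow 2 r).add_const b)
    have l1 := (h1.log (hpa r).ne')
    have l2 := (h2.log (hpb r).ne')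
    have d1 := ((hasDerivAt_const r a).div h1 (hpa r).ne')
    have d2 := ((hasDerivAt_const r b).div h2 (hpb r).ne')
    have := (((l1.add d1).sub l2).sub d2).div_const 2
    refine this.congr_deriv ?_
    field_simp
    ring
  have htend : Tendsto g atTop (nhds 0) := by
    have h1 : Tendsto (fun r : ℝ => Real.log (r ^ 2 + a) - Real.log (r ^ 2 + b)) atTop (nhds 0) := by
      have : ∀ r : ℝ, Real.log (r ^ 2 + a) - Real.log (r ^ 2 + b)
          = Real.log ((r ^ 2 + a) / (r ^ 2 + b)) := fun r =>
        (Real.log_div (hpa r).ne' (hpb r).ne').symm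
      simp_rw [this]
      have h2 : Tendsto (fun r : ℝ => (r ^ 2 + a) / (r ^ 2 + b)) atTop (nhds 1) := by
        have h3 : ∀ r : ℝ, (r ^ 2 + a) / (r ^ 2 + b) = 1 + (a - b) / (r ^ 2 + b) := by
          intro r; field_simp; ring
        simp_rw [h3]
        have h4 : Tendsto (fun r : ℝ => (a - b) / (r ^ 2 + b)) atTop (nhds 0) := by
          apply Tendsto.div_atTop tendsto_const_nhds
          exact tendsto_atTop_add_const_right _ b (tendsto_pow_atTop (two_ne_zero))
        simpa using tendsto_const_nhds.add h4
      have := (Real.continuousAt_log one_ne_zero).tendsto.comp h2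
      simpa [Function.comp_def] using this
    have h5 : Tendsto (fun r : ℝ => a / (r ^ 2 + a)) atTop (nhds 0) := by
      apply Tendsto.div_atTop tendsto_const_nhds
      exact tendsto_atTop_add_const_right _ a (tendsto_pow_atTop (two_ne_zero))
    have h6 : Tendsto (fun r : ℝ => b / (r ^ 2 + b)) atTop (nhds 0) := by
      apply Tendsto.div_atTop tendsto_const_nhds
      exact tendsto_atTop_add_const_right _ b (tendsto_pow_atTop (two_ne_zero))
    have := (((h1.add h5).sub h6).div_const 2).congr (fun r => by
      show _ = g r
      rw [hg]
      ring)
    simpa using this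
  have hpos : ∀ r ∈ Ioi (0:ℝ), 0 ≤ r ^ 3 * (((r ^ 2 + a) ^ 2)⁻¹ - ((r ^ 2 + b) ^ 2)⁻¹) := by
    intro r hr
    have : ((r ^ 2 + b) ^ 2)⁻¹ ≤ ((r ^ 2 + a) ^ 2)⁻¹ := by
      apply inv_anti₀ (by positivity)
      have : r ^ 2 + a ≤ r ^ 2 + b := by linarith
      nlinarith [hpa r]
    exact mul_nonneg (pow_nonneg (le_of_lt hr) 3) (sub_nonneg.mpr this)
  have hint := integrableOn_Ioi_deriv_of_nonneg' (fun x _ => hderiv x) hpos htend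
  refine ⟨hint, ?_⟩
  have := integral_Ioi_of_hasDerivAt_of_nonneg' (fun x _ => hderiv x) hpos htend
  rw [this, hg]
  simp only []
  rw [zero_sub]
  have : ((0:ℝ) ^ 2 + a) = a := by ring
  rw [this]
  have : ((0:ℝ) ^ 2 + b) = b := by ring
  rw [this]
  rw [div_self ha.ne', div_self hb.ne']
  ring

lemma pv_pointwise_bound (a b K : ℝ) (ha : 0 < a) (hab : a ≤ b)
    (hK : K = 8 * (b - a) * (2 + a + b) / (min a 1) ^ 4) (t : ℝ) (ht : 0 ≤ t) :
    ((t ^ 2 + a) ^ 2)⁻¹ - ((t ^ 2 + b) ^ 2)⁻¹ ≤ K * ((1 + t) ^ 6)⁻¹ := by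
  have hb : 0 < b := ha.trans_le hab
  set c := min a 1 with hc
  have hc0 : 0 < c := lt_min ha one_pos
  have hca : c ≤ a := min_le_left _ _
  have hc1 : c ≤ 1 := min_le_right _ _
  have hpa : 0 < t ^ 2 + a := by positivity
  have hpb : 0 < t ^ 2 + b := by positivity
  have h1 : c * (1 + t ^ 2) ≤ t ^ 2 + a := by nlinarith [sq_nonneg t]
  have h2 : c * (1 + t ^ 2) ≤ t ^ 2 + b := h1.trans (by linarith)
  have heq : ((t ^ 2 + a) ^ 2)⁻¹ - ((t ^ 2 + b) ^ 2)⁻¹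
      = ((b - a) * (2 * t ^ 2 + a + b)) / ((t ^ 2 + a) ^ 2 * (t ^ 2 + b) ^ 2) := by
    field_simp
    ring
  have hden : (c * (1 + t ^ 2)) ^ 2 * (c * (1 + t ^ 2)) ^ 2 ≤ (t ^ 2 + a) ^ 2 * (t ^ 2 + b) ^ 2 :=
    mul_le_mul (pow_le_pow_left₀ (by positivity) h1 2) (pow_le_pow_left₀ (by positivity) h2 2)
      (by positivity) (by positivity)
  have hnum : (b - a) * (2 * t ^ 2 + a + b) ≤ (b - a) * ((2 + a + b) * (1 + t ^ 2)) :=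
    mul_le_mul_of_nonneg_left (by nlinarith [sq_nonneg t]) (by linarith)
  have hnum0 : 0 ≤ (b - a) * (2 * t ^ 2 + a + b) := by nlinarith [sq_nonneg t]
  calc ((t ^ 2 + a) ^ 2)⁻¹ - ((t ^ 2 + b) ^ 2)⁻¹
      = ((b - a) * (2 * t ^ 2 + a + b)) / ((t ^ 2 + a) ^ 2 * (t ^ 2 + b) ^ 2) := heq
    _ ≤ ((b - a) * ((2 + a + b) * (1 + t ^ 2))) / ((c * (1 + t ^ 2)) ^ 2 * (c * (1 + t ^ 2)) ^ 2) :=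
        div_le_div₀ (by nlinarith [sq_nonneg t]) hnum (by positivity) hden
    _ = ((b - a) * (2 + a + b) / c ^ 4) / (1 + t ^ 2) ^ 3 := by
        field_simp
    _ ≤ K * ((1 + t) ^ 6)⁻¹ := by
        have hrw : K * ((1 + t) ^ 6)⁻¹ = (8 * (b - a) * (2 + a + b) / c ^ 4) / (1 + t) ^ 6 := by
          rw [hK]; ring
        rw [hrw, div_le_div_iff₀ (by positivity) (by positivity)]
        have h3 : (1 + t) ^ 2 ≤ 2 * (1 + t ^ 2) := by nlinarith [sq_nonneg (1 - t)]
        have h4 : (1 + t) ^ 6 ≤ 8 * (1 + t ^ 2) ^ 3 := by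
          have h5 := pow_le_pow_left₀ (by positivity : (0:ℝ) ≤ (1 + t) ^ 2) h3 3
          calc (1 + t) ^ 6 = ((1 + t) ^ 2) ^ 3 := by ring
            _ ≤ (2 * (1 + t ^ 2)) ^ 3 := h5
            _ = 8 * (1 + t ^ 2) ^ 3 := by ring
        have hX : 0 ≤ (b - a) * (2 + a + b) / c ^ 4 :=
          div_nonneg (by nlinarith) (by positivity)
        calc (b - a) * (2 + a + b) / c ^ 4 * (1 + t) ^ 6
            ≤ (b - a) * (2 + a + b) / c ^ 4 * (8 * (1 + t ^ 2) ^ 3) :=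
              mul_le_mul_of_nonneg_left h4 hX
          _ = 8 * (b - a) * (2 + a + b) / c ^ 4 * (1 + t ^ 2) ^ 3 := by ring

lemma pv_rad (a b : ℝ) (ha : 0 < a) (hab : a ≤ b) :
    Integrable (fun q : E4 => ((‖q‖ ^ 2 + a) ^ 2)⁻¹ - ((‖q‖ ^ 2 + b) ^ 2)⁻¹) ∧
    ∫ q : E4, (((‖q‖ ^ 2 + a) ^ 2)⁻¹ - ((‖q‖ ^ 2 + b) ^ 2)⁻¹)
      = π ^ 2 * (Real.log b - Real.log a) := by
  have hb : 0 < b := ha.trans_le hab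
  have hcont : Continuous (fun q : E4 => ((‖q‖ ^ 2 + a) ^ 2)⁻¹ - ((‖q‖ ^ 2 + b) ^ 2)⁻¹) := by
    have h1 : Continuous (fun q : E4 => ((‖q‖ ^ 2 + a) ^ 2)⁻¹) := by
      apply Continuous.inv₀
      · exact (((continuous_norm.pow 2).add continuous_const).pow 2)
      · intro q
        positivity
    have h2 : Continuous (fun q : E4 => ((‖q‖ ^ 2 + b) ^ 2)⁻¹) := by
      apply Continuous.inv₀
      · exact (((continuous_norm.pow 2).add continuous_const).pow 2)
      · intro q
        positivity
    exact h1.sub h2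
  constructor
  · set K := 8 * (b - a) * (2 + a + b) / (min a 1) ^ 4 with hK
    have hKint : Integrable (fun q : E4 => K * (1 + ‖q‖) ^ (-(6:ℝ))) := by
      apply Integrable.const_mul
      apply integrable_one_add_norm (E := E4)
      rw [finrank_euclideanSpace_fin]
      norm_num
    apply Integrable.mono' hKint hcont.aestronglyMeasurable
    refine ae_of_all _ fun q => ?_
    have hnn : 0 ≤ ((‖q‖ ^ 2 + a) ^ 2)⁻¹ - ((‖q‖ ^ 2 + b) ^ 2)⁻¹ := by
      refine sub_nonneg.mpr (inv_anti₀ (by positivity) ?_)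
      have : ‖q‖ ^ 2 + a ≤ ‖q‖ ^ 2 + b := by linarith
      nlinarith [norm_nonneg q, sq_nonneg ‖q‖]
    rw [Real.norm_eq_abs, abs_of_nonneg hnn]
    have hbd := pv_pointwise_bound a b K ha hab hK ‖q‖ (norm_nonneg q)
    have hrpow : (1 + ‖q‖) ^ (-(6:ℝ)) = ((1 + ‖q‖) ^ 6)⁻¹ := by
      rw [Real.rpow_neg (by positivity)]
      norm_num
    rw [hrpow]
    exact hbd
  · have := integral_fun_norm_addHaar (volume : Measure E4)
      (fun r : ℝ => ((r ^ 2 + a) ^ 2)⁻¹ - ((r ^ 2 + b) ^ 2)⁻¹)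
    have hdim : Module.finrank ℝ E4 = 4 := finrank_euclideanSpace_fin
    rw [hdim] at this
    rw [this]
    have hball : (volume (Metric.ball (0 : E4) 1)).toReal = π ^ 2 / 2 := by
      rw [EuclideanSpace.volume_ball]
      have hcard : Fintype.card (Fin 4) = 4 := by simp
      rw [hcard]
      have h3 : ((4:ℕ) / 2 + 1 : ℝ) = 3 := by norm_num
      rw [h3]
      have hg : Real.Gamma 3 = 2 := by
        have := Real.Gamma_nat_eq_factorial 2
        norm_num at this
        convert this using 2
        norm_num
      rw [hg]
      have hsq : Real.sqrt π ^ 4 = π ^ 2 := by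
        rw [show (4:ℕ) = 2 * 2 from rfl, pow_mul, Real.sq_sqrt Real.pi_pos.le]
      rw [hsq]
      rw [ENNReal.ofReal_one, one_pow, one_mul, ENNReal.toReal_ofReal (by positivity)]
    rw [measureReal_def, hball]
    have hod := (pv_onedim a b ha hab).2
    have : ∫ y in Ioi (0:ℝ), y ^ (4 - 1) • (((y ^ 2 + a) ^ 2)⁻¹ - ((y ^ 2 + b) ^ 2)⁻¹)
        = (Real.log b - Real.log a) / 2 := by
      rw [← hod]
      apply setIntegral_congr_fun measurableSet_Ioi
      intro y hy
      simp [smul_eq_mul]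
    rw [this]
    simp only [nsmul_eq_mul, smul_eq_mul]
    ring

lemma pv_feynman (A B : ℝ) (hA : 0 < A) (hB : 0 < B) :
    ∫ β in (0:ℝ)..1, ((β * A + (1 - β) * B) ^ 2)⁻¹ = (A * B)⁻¹ := by
  have hpos : ∀ x ∈ uIcc (0:ℝ) 1, 0 < x * A + (1 - x) * B := by
    intro x hx
    rw [uIcc_of_le zero_le_one] at hx
    obtain ⟨h0, h1⟩ := hx
    have hm : 0 < min A B := lt_min hA hB
    nlinarith [mul_le_mul_of_nonneg_left (min_le_left A B) h0,
      mul_le_mul_of_nonneg_left (min_le_right A B) (by linarith : (0:ℝ) ≤ 1 - x)]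
  have hderiv : ∀ x ∈ uIcc (0:ℝ) 1,
      HasDerivAt (fun β => β / (B * (β * A + (1 - β) * B))) (((x * A + (1 - x) * B) ^ 2)⁻¹) x := by
    intro x hx
    have hx0 := hpos x hx
    have hg : HasDerivAt (fun β : ℝ => B * (β * A + (1 - β) * B)) (B * (A - B)) x := by
      have : HasDerivAt (fun β : ℝ => β * A + (1 - β) * B) (A - B) x := by
        have h1 : HasDerivAt (fun β : ℝ => β * A) A x := by
          simpa using (hasDerivAt_id x).mul_const A
        have h2 : HasDerivAt (fun β : ℝ => (1 - β) * B) (-B) x := by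
          have := ((hasDerivAt_id x).const_sub 1).mul_const B
          simpa using this
        exact (h1.add h2).congr_deriv (by ring)
      simpa using this.const_mul B
    have hne : B * (x * A + (1 - x) * B) ≠ 0 := by positivity
    have := (hasDerivAt_id x).div hg hne
    refine this.congr_deriv ?_
    simp only [id]
    field_simp
    ring
  have hint : IntervalIntegrable (fun x : ℝ => ((x * A + (1 - x) * B) ^ 2)⁻¹) volume 0 1 := by
    apply ContinuousOn.intervalIntegrable
    apply ContinuousOn.inv₀
    · fun_prop
    · intro x hx
      exact pow_ne_zero 2 (hpos x hx).ne'
  have := intervalIntegral.integral_eq_sub_of_hasDerivAt hderiv hint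
  rw [this]
  field_simp
  ring

lemma pv_shift (p q : E4) (m β : ℝ) :
    β * (‖q + p‖ ^ 2 + m) + (1 - β) * (‖q‖ ^ 2 + m)
      = ‖q + β • p‖ ^ 2 + (β * (1 - β) * ‖p‖ ^ 2 + m) := by
  have h1 : ‖q + p‖ ^ 2 = ‖q‖ ^ 2 + 2 * inner ℝ q p + ‖p‖ ^ 2 := norm_add_sq_real q p
  have h2 : ‖q + β • p‖ ^ 2 = ‖q‖ ^ 2 + 2 * (β * inner ℝ q p) + β ^ 2 * ‖p‖ ^ 2 := by
    rw [norm_add_sq_real q (β • p), real_inner_smul_right, norm_smul]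
    simp [mul_pow, sq_abs]
  rw [h1, h2]
  ring

lemma pv_rep (p : E4) (m : ℝ) (hm : 0 < m) (q : E4) :
    ((‖q + p‖ ^ 2 + m) * (‖q‖ ^ 2 + m))⁻¹
      = ∫ β in (0:ℝ)..1, ((‖q + β • p‖ ^ 2 + (β * (1 - β) * ‖p‖ ^ 2 + m)) ^ 2)⁻¹ := by
  rw [← pv_feynman (‖q + p‖ ^ 2 + m) (‖q‖ ^ 2 + m) (by positivity) (by positivity)]
  apply intervalIntegral.integral_congr
  intro β _
  dsimp only
  rw [pv_shift p q m β]

lemma pv_pair (p : E4) (c d : ℝ) (hc : 0 < c) (hcd : c ≤ d) :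
    Integrable (fun q : E4 => ((‖q + p‖ ^ 2 + c) * (‖q‖ ^ 2 + c))⁻¹
      - ((‖q + p‖ ^ 2 + d) * (‖q‖ ^ 2 + d))⁻¹) ∧
    ∫ q : E4, (((‖q + p‖ ^ 2 + c) * (‖q‖ ^ 2 + c))⁻¹ - ((‖q + p‖ ^ 2 + d) * (‖q‖ ^ 2 + d))⁻¹)
      = π ^ 2 * ∫ β in (0:ℝ)..1,
          (Real.log (β * (1 - β) * ‖p‖ ^ 2 + d) - Real.log (β * (1 - β) * ‖p‖ ^ 2 + c)) := by
  have hd : 0 < d := hc.trans_le hcd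
  set Δc : ℝ → ℝ := fun β => β * (1 - β) * ‖p‖ ^ 2 + c with hΔc
  set Δd : ℝ → ℝ := fun β => β * (1 - β) * ‖p‖ ^ 2 + d with hΔd
  set H : ℝ → E4 → ℝ := fun β q =>
    ((‖q + β • p‖ ^ 2 + Δc β) ^ 2)⁻¹ - ((‖q + β • p‖ ^ 2 + Δd β) ^ 2)⁻¹ with hH
  set ν : Measure ℝ := volume.restrict (Ioc (0:ℝ) 1) with hν
  haveI : IsFiniteMeasure ν := by
    constructor
    rw [hν, Measure.restrict_apply_univ, Real.volume_Ioc]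
    simp
  haveI : SFinite ν := inferInstance
  -- positivity facts on [0,1]
  have hmulnn : ∀ β ∈ Icc (0:ℝ) 1, 0 ≤ β * (1 - β) * ‖p‖ ^ 2 := by
    intro β hβ
    have h1 := hβ.1
    have h2 := hβ.2
    have : 0 ≤ 1 - β := by linarith
    positivity
  have hΔcpos : ∀ β ∈ Icc (0:ℝ) 1, 0 < Δc β := by
    intro β hβ
    have := hmulnn β hβ
    rw [hΔc]
    dsimp only
    linarith
  have hΔle : ∀ β : ℝ, Δc β ≤ Δd β := by
    intro β
    rw [hΔc, hΔd]
    dsimp only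
    linarith
  -- measurability of H on the product
  have hmeas : AEStronglyMeasurable (fun z : ℝ × E4 => H z.1 z.2) (ν.prod volume) := by
    have c1 : Continuous (fun z : ℝ × E4 => (‖z.2 + z.1 • p‖ ^ 2 + Δc z.1) ^ 2) := by
      rw [hΔc]; fun_prop
    have c2 : Continuous (fun z : ℝ × E4 => (‖z.2 + z.1 • p‖ ^ 2 + Δd z.1) ^ 2) := by
      rw [hΔd]; fun_prop
    exact ((c1.measurable.inv.sub c2.measurable.inv).aestronglyMeasurable)
  -- for β in (0,1], fiberwise integrability and integral value
  have hInt : ∀ β ∈ Ioc (0:ℝ) 1, Integrable (H β) := by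
    intro β hβ
    have hβ' : β ∈ Icc (0:ℝ) 1 := Ioc_subset_Icc_self hβ
    exact ((pv_rad (Δc β) (Δd β) (hΔcpos β hβ') (hΔle β)).1).comp_add_right (β • p)
  have hIntegral : ∀ β ∈ Ioc (0:ℝ) 1,
      ∫ q : E4, H β q = π ^ 2 * (Real.log (Δd β) - Real.log (Δc β)) := by
    intro β hβ
    have hβ' : β ∈ Icc (0:ℝ) 1 := Ioc_subset_Icc_self hβ
    have := integral_add_right_eq_self (μ := (volume : Measure E4))
      (fun q : E4 => ((‖q‖ ^ 2 + Δc β) ^ 2)⁻¹ - ((‖q‖ ^ 2 + Δd β) ^ 2)⁻¹) (β • p)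
    rw [hH]
    dsimp only
    rw [this]
    exact (pv_rad (Δc β) (Δd β) (hΔcpos β hβ') (hΔle β)).2
  have hnonneg : ∀ β ∈ Ioc (0:ℝ) 1, ∀ q : E4, 0 ≤ H β q := by
    intro β hβ q
    have hβ' : β ∈ Icc (0:ℝ) 1 := Ioc_subset_Icc_self hβ
    have h1 := hΔcpos β hβ'
    have h2 := hΔle β
    rw [hH]
    dsimp only
    have : ((‖q + β • p‖ ^ 2 + Δd β) ^ 2)⁻¹ ≤ ((‖q + β • p‖ ^ 2 + Δc β) ^ 2)⁻¹ := by
      apply inv_anti₀ (by positivity)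
      nlinarith [norm_nonneg (q + β • p), sq_nonneg ‖q + β • p‖]
    linarith
  -- bound for the log difference
  have hlogbd : ∀ β ∈ Ioc (0:ℝ) 1,
      0 ≤ Real.log (Δd β) - Real.log (Δc β) ∧
      Real.log (Δd β) - Real.log (Δc β) ≤ (d - c) / c := by
    intro β hβ
    have hβ' : β ∈ Icc (0:ℝ) 1 := Ioc_subset_Icc_self hβ
    have h1 := hΔcpos β hβ'
    have h2 := hΔle β
    have h3 : 0 < Δd β := lt_of_lt_of_le h1 h2
    constructor
    · exact sub_nonneg.mpr (Real.log_le_log h1 h2)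
    · have h4 : Real.log (Δd β) - Real.log (Δc β) = Real.log (Δd β / Δc β) := by
        rw [Real.log_div h3.ne' h1.ne']
      rw [h4]
      have h5 : Real.log (Δd β / Δc β) ≤ Δd β / Δc β - 1 :=
        Real.log_le_sub_one_of_pos (by positivity)
      have h6 : Δd β / Δc β - 1 = (d - c) / Δc β := by
        field_simp
        rw [hΔc, hΔd]
        ring
      rw [h6] at h5
      refine h5.trans ?_
      apply div_le_div_of_nonneg_left (by linarith) hc
      rw [hΔc]
      dsimp only
      linarith [hmulnn β hβ']
  -- product integrability
  have hprod : Integrable (fun z : ℝ × E4 => H z.1 z.2) (ν.prod volume) := by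
    rw [integrable_prod_iff hmeas]
    constructor
    · rw [hν]
      filter_upwards [ae_restrict_mem measurableSet_Ioc] with β hβ
      exact hInt β hβ
    · apply Integrable.mono' (integrable_const (π ^ 2 * ((d - c) / c)))
        (hmeas.norm.integral_prod_right')
      rw [hν]
      filter_upwards [ae_restrict_mem measurableSet_Ioc] with β hβ
      have heq : ∫ q : E4, ‖H β q‖ = ∫ q : E4, H β q := by
        congr 1
        ext q
        rw [Real.norm_eq_abs, abs_of_nonneg (hnonneg β hβ q)]
      rw [heq, hIntegral β hβ, Real.norm_eq_abs,
        abs_of_nonneg (mul_nonneg (by positivity) (hlogbd β hβ).1)]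
      exact mul_le_mul_of_nonneg_left (hlogbd β hβ).2 (by positivity)
  -- pointwise representation
  have hrepr : ∀ q : E4,
      ((‖q + p‖ ^ 2 + c) * (‖q‖ ^ 2 + c))⁻¹ - ((‖q + p‖ ^ 2 + d) * (‖q‖ ^ 2 + d))⁻¹
        = ∫ β in Ioc (0:ℝ) 1, H β q := by
    intro q
    have hI : ∀ m : ℝ, 0 < m → IntervalIntegrable
        (fun β => ((‖q + β • p‖ ^ 2 + (β * (1 - β) * ‖p‖ ^ 2 + m)) ^ 2)⁻¹) volume 0 1 := by
      intro m hm
      apply ContinuousOn.intervalIntegrable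
      apply ContinuousOn.inv₀
      · fun_prop
      · intro β hβ
        rw [uIcc_of_le zero_le_one] at hβ
        have h1 := hβ.1
        have h2 := hβ.2
        have h3 : 0 ≤ β * (1 - β) * ‖p‖ ^ 2 := by
          have : 0 ≤ 1 - β := by linarith
          positivity
        have : 0 < ‖q + β • p‖ ^ 2 + (β * (1 - β) * ‖p‖ ^ 2 + m) := by positivity
        positivity
    rw [pv_rep p c hc q, pv_rep p d hd q,
      ← intervalIntegral.integral_sub (hI c hc) (hI d hd),
      intervalIntegral.integral_of_le zero_le_one]
  have hRHS : (fun q : E4 => ∫ β, H β q ∂ν)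
      = fun q : E4 => ((‖q + p‖ ^ 2 + c) * (‖q‖ ^ 2 + c))⁻¹
          - ((‖q + p‖ ^ 2 + d) * (‖q‖ ^ 2 + d))⁻¹ := by
    ext q
    rw [hν, ← hrepr q]
  constructor
  · have h1 : Integrable (fun q : E4 => ∫ β, H β q ∂ν) volume :=
      by
        have hsw := @Integrable.swap ℝ E4 ℝ _ _ ν (volume : Measure E4) _ _ _
          (fun z : ℝ × E4 => H z.1 z.2) hprod
        simpa [Function.comp] using hsw.integral_prod_left
    rw [hRHS] at h1
    exact h1
  · have hswap := @integral_integral_swap ℝ E4 ℝ _ _ ν (volume : Measure E4) _ _ _ _ H hprod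
    rw [hRHS] at hswap
    rw [← hswap]
    have hLHS : ∫ β, (∫ q : E4, H β q) ∂ν
        = ∫ β in Ioc (0:ℝ) 1, π ^ 2 * (Real.log (Δd β) - Real.log (Δc β)) := by
      rw [hν]
      exact setIntegral_congr_fun measurableSet_Ioc fun β hβ => hIntegral β hβ
    rw [hLHS, ← intervalIntegral.integral_of_le zero_le_one,
      intervalIntegral.integral_const_mul]

lemma pv_pair' (p : E4) (c d : ℝ) (hc : 0 < c) (hd : 0 < d) :
    Integrable (fun q : E4 => ((‖q + p‖ ^ 2 + c) * (‖q‖ ^ 2 + c))⁻¹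
      - ((‖q + p‖ ^ 2 + d) * (‖q‖ ^ 2 + d))⁻¹) ∧
    ∫ q : E4, (((‖q + p‖ ^ 2 + c) * (‖q‖ ^ 2 + c))⁻¹ - ((‖q + p‖ ^ 2 + d) * (‖q‖ ^ 2 + d))⁻¹)
      = π ^ 2 * ∫ β in (0:ℝ)..1,
          (Real.log (β * (1 - β) * ‖p‖ ^ 2 + d) - Real.log (β * (1 - β) * ‖p‖ ^ 2 + c)) := by
  rcases le_total c d with hcd | hdc
  · exact pv_pair p c d hc hcd
  · obtain ⟨h1, h2⟩ := pv_pair p d c hd hdc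
    constructor
    · have := h1.neg
      refine this.congr (ae_of_all _ fun q => ?_)
      simp only [Pi.neg_apply]
      ring
    · have hneg : (fun q : E4 => ((‖q + p‖ ^ 2 + c) * (‖q‖ ^ 2 + c))⁻¹
          - ((‖q + p‖ ^ 2 + d) * (‖q‖ ^ 2 + d))⁻¹)
          = fun q : E4 => -(((‖q + p‖ ^ 2 + d) * (‖q‖ ^ 2 + d))⁻¹
            - ((‖q + p‖ ^ 2 + c) * (‖q‖ ^ 2 + c))⁻¹) := by
        ext q
        ring
      rw [hneg, integral_neg, h2]
      rw [← mul_neg, ← intervalIntegral.integral_neg]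
      congr 1
      apply intervalIntegral.integral_congr
      intro x _
      dsimp only
      ring

/-- Identity (int-q2): the two-propagator Pauli–Villars integral in Feynman
parametrization. -/
theorem integral_pauliVillars_two_propagators (n : ℕ) (A M : Fin (n + 1) → ℝ)
    (hM : ∀ i, 0 < M i) (hA : ∑ i, A i = 0) (p : EuclideanSpace ℝ (Fin 4)) :
    Integrable (fun q : EuclideanSpace ℝ (Fin 4) =>
      ∑ i, A i / ((‖q + p‖ ^ 2 + M i ^ 2) * (‖q‖ ^ 2 + M i ^ 2))) ∧
    ∫ q : EuclideanSpace ℝ (Fin 4),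
        ∑ i, A i / ((‖q + p‖ ^ 2 + M i ^ 2) * (‖q‖ ^ 2 + M i ^ 2)) =
      -π ^ 2 * ∫ β in (0 : ℝ)..1,
        ∑ i, A i * Real.log (β * (1 - β) * ‖p‖ ^ 2 + M i ^ 2) := by
  set G : Fin (n + 1) → E4 → ℝ := fun i q =>
    ((‖q + p‖ ^ 2 + M i ^ 2) * (‖q‖ ^ 2 + M i ^ 2))⁻¹
      - ((‖q + p‖ ^ 2 + M 0 ^ 2) * (‖q‖ ^ 2 + M 0 ^ 2))⁻¹ with hG
  have hpair : ∀ i, Integrable (G i) ∧ ∫ q : E4, G i q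
      = π ^ 2 * ∫ β in (0:ℝ)..1,
          (Real.log (β * (1 - β) * ‖p‖ ^ 2 + M 0 ^ 2)
            - Real.log (β * (1 - β) * ‖p‖ ^ 2 + M i ^ 2)) := by
    intro i
    exact pv_pair' p (M i ^ 2) (M 0 ^ 2) (by have := hM i; positivity)
      (by have := hM 0; positivity)
  -- pointwise identity
  have hpt : (fun q : E4 => ∑ i, A i / ((‖q + p‖ ^ 2 + M i ^ 2) * (‖q‖ ^ 2 + M i ^ 2)))
      = fun q : E4 => ∑ i, A i * G i q := by
    ext q
    rw [hG]
    dsimp only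
    simp only [mul_sub, Finset.sum_sub_distrib, ← Finset.sum_mul, hA, zero_mul, sub_zero]
    apply Finset.sum_congr rfl
    intro i _
    rw [div_eq_mul_inv]
  -- interval integrability of the logs
  have hlogII : ∀ i, IntervalIntegrable
      (fun β => Real.log (β * (1 - β) * ‖p‖ ^ 2 + M i ^ 2)) volume 0 1 := by
    intro i
    apply ContinuousOn.intervalIntegrable
    apply ContinuousOn.log
    · fun_prop
    · intro β hβ
      rw [uIcc_of_le zero_le_one] at hβ
      have h1 := hβ.1
      have h2 : 0 ≤ 1 - β := by linarith [hβ.2]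
      have h3 := hM i
      positivity
  constructor
  · rw [hpt]
    exact integrable_finset_sum _ fun i _ => ((hpair i).1).const_mul (A i)
  · rw [hpt]
    rw [integral_finset_sum _ fun i _ => ((hpair i).1).const_mul (A i)]
    have hval : ∀ i, ∫ q : E4, A i * G i q
        = A i * (π ^ 2 * ∫ β in (0:ℝ)..1,
            (Real.log (β * (1 - β) * ‖p‖ ^ 2 + M 0 ^ 2)
              - Real.log (β * (1 - β) * ‖p‖ ^ 2 + M i ^ 2))) := by
      intro i
      rw [integral_const_mul, (hpair i).2]
    rw [Finset.sum_congr rfl fun i _ => hval i]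
    have hstep : ∀ i : Fin (n + 1), A i * (π ^ 2 * ∫ β in (0:ℝ)..1,
          (Real.log (β * (1 - β) * ‖p‖ ^ 2 + M 0 ^ 2)
            - Real.log (β * (1 - β) * ‖p‖ ^ 2 + M i ^ 2)))
        = π ^ 2 * ∫ β in (0:ℝ)..1,
          (A i * Real.log (β * (1 - β) * ‖p‖ ^ 2 + M 0 ^ 2)
            - A i * Real.log (β * (1 - β) * ‖p‖ ^ 2 + M i ^ 2)) := by
      intro i
      have e1 : ∫ β in (0:ℝ)..1, (A i * Real.log (β * (1 - β) * ‖p‖ ^ 2 + M 0 ^ 2)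
            - A i * Real.log (β * (1 - β) * ‖p‖ ^ 2 + M i ^ 2))
          = A i * (∫ β in (0:ℝ)..1, Real.log (β * (1 - β) * ‖p‖ ^ 2 + M 0 ^ 2))
            - A i * (∫ β in (0:ℝ)..1, Real.log (β * (1 - β) * ‖p‖ ^ 2 + M i ^ 2)) := by
        rw [intervalIntegral.integral_sub ((hlogII 0).const_mul (A i))
          ((hlogII i).const_mul (A i)), intervalIntegral.integral_const_mul,
          intervalIntegral.integral_const_mul]
      have e2 : ∫ β in (0:ℝ)..1, (Real.log (β * (1 - β) * ‖p‖ ^ 2 + M 0 ^ 2)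
            - Real.log (β * (1 - β) * ‖p‖ ^ 2 + M i ^ 2))
          = (∫ β in (0:ℝ)..1, Real.log (β * (1 - β) * ‖p‖ ^ 2 + M 0 ^ 2))
            - ∫ β in (0:ℝ)..1, Real.log (β * (1 - β) * ‖p‖ ^ 2 + M i ^ 2) :=
        intervalIntegral.integral_sub (hlogII 0) (hlogII i)
      rw [e1, e2]
      ring
    rw [Finset.sum_congr rfl fun i _ => hstep i]
    rw [← Finset.mul_sum]
    rw [← intervalIntegral.integral_finset_sum
      (fun i _ => ((hlogII 0).const_mul (A i)).sub ((hlogII i).const_mul (A i)))]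
    have hfinal : ∀ β : ℝ, (∑ i, (A i * Real.log (β * (1 - β) * ‖p‖ ^ 2 + M 0 ^ 2)
          - A i * Real.log (β * (1 - β) * ‖p‖ ^ 2 + M i ^ 2)))
        = -(∑ i, A i * Real.log (β * (1 - β) * ‖p‖ ^ 2 + M i ^ 2)) := by
      intro β
      rw [Finset.sum_sub_distrib, ← Finset.sum_mul, hA, zero_mul, zero_sub]
    rw [intervalIntegral.integral_congr (fun β _ => hfinal β)]
    rw [intervalIntegral.integral_neg]
    ring
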